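/- Let δ ∈ (0,1) be such that |z + 1/3| < δ/3 implies |1/(z(z+1)²) + 27/4| < 27/8 for z ∈ ℂ. Let w, τ ∈ ℂ be nonzero with |w³/τ² + 27/4| ≥ 27/8, and let v be a root of v³ + wv − τ. Then |3v² + w| ≥ δ|w|. -/

import Mathlib

/-- If `δ ∈ (0,1)` is such that `|z + 1/3| < δ/3` implies
`|1/(z(z+1)²) + 27/4| < 27/8`, and `w, τ` are nonzero with
`|w³/τ² + 27/4| ≥ 27/8`, then every root `v` of `v³ + wv − τ` satisfies
`|3v² + w| ≥ δ|w|`. -/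
theorem stmt_5 (δ : ℝ) (hδ0 : 0 < δ) (hδ1 : δ < 1)
    (hδ : ∀ z : ℂ, ‖z + 1 / 3‖ < δ / 3 →
      ‖1 / (z * (z + 1) ^ 2) + 27 / 4‖ < 27 / 8)
    (w τ : ℂ) (hw : w ≠ 0) (hτ : τ ≠ 0)
    (hT : ‖w ^ 3 / τ ^ 2 + 27 / 4‖ ≥ 27 / 8)
    (v : ℂ) (hv : v ^ 3 + w * v - τ = 0) :
    ‖3 * v ^ 2 + w‖ ≥ δ * ‖w‖ := by
  by_contra h
  push_neg at h
  set z : ℂ := v ^ 2 / w with hz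
  have hv0 : v ≠ 0 := by
    intro h0; apply hτ
    rw [h0] at hv; simpa using hv.symm
  have hτv : τ = v * (v ^ 2 + w) := by linear_combination -hv
  have hvw : v ^ 2 + w ≠ 0 := by
    intro h0; apply hτ; rw [hτv, h0, mul_zero]
  have hz0 : z ≠ 0 := div_ne_zero (pow_ne_zero _ hv0) hw
  have hz1 : z + 1 ≠ 0 := by
    rw [hz]; field_simp
    intro h0; exact hvw ((div_eq_zero_iff.mp h0).resolve_right hw)
  have key : w ^ 3 / τ ^ 2 = 1 / (z * (z + 1) ^ 2) := by
    rw [hτv, hz]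
    field_simp
  have habs : ‖z + 1 / 3‖ < δ / 3 := by
    have : z + 1 / 3 = (3 * v ^ 2 + w) / (3 * w) := by
      rw [hz]; field_simp
    rw [this, norm_div]
    have h3w : 0 < ‖3 * w‖ := norm_pos_iff.mpr (by simp [hw])
    rw [div_lt_div_iff₀ h3w (by norm_num)]
    have : ‖3 * w‖ = 3 * ‖w‖ := by
      rw [norm_mul]; norm_num
    rw [this]
    nlinarith [norm_nonneg w]
  have := hδ z habs
  rw [← key] at this
  linarith
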